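/- For every n ≥ 1, every probability distribution p = (p_1, ..., p_n) with p_1 ≥ ... ≥ p_n > 0 and Σ p_i = 1, and every α ∈ (0, 1/2], the guessing entropy satisfies E[G(p)] ≥ (1/e)·2^{H(p) + p_n·h(α)} - α·p_n + 1/2. -/

import Mathlib

/-- Shannon entropy in bits. -/
noncomputable def shannonEntropy {n : ℕ} (p : Fin n → ℝ) : ℝ :=
  -∑ i, p i * Real.logb 2 (p i)

/-- Guessing entropy: expected number of guesses (indices counted from 1). -/
noncomputable def guessingEntropy {n : ℕ} (p : Fin n → ℝ) : ℝ :=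
  ∑ i : Fin n, (((i : ℕ) : ℝ) + 1) * p i

/-- Binary entropy function (in bits). -/
noncomputable def binaryEntropy (α : ℝ) : ℝ :=
  -α * Real.logb 2 α - (1 - α) * Real.logb 2 (1 - α)


lemma exp_key (u : ℝ) (hu : 0 < u) : u * Real.exp (-(u/2)) ≤ 1 - Real.exp (-u) := by
  have h := Real.self_lt_sinh_iff.2 (by linarith : (0:ℝ) < u/2)
  rw [Real.sinh_eq] at h
  have hp := Real.exp_pos (-(u/2))
  have he : Real.exp (-u) = Real.exp (-(u/2)) * Real.exp (-(u/2)) := by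
    rw [← Real.exp_add]; ring_nf
  have he2 : Real.exp (u/2) * Real.exp (-(u/2)) = 1 := by
    rw [← Real.exp_add]; simp
  nlinarith [Real.exp_pos (u/2)]

lemma geo_key (N : ℕ) (u : ℝ) (hu : 0 < u) :
    u * ∑ i ∈ Finset.range N, Real.exp (-(u*(i+1/2))) ≤ 1 := by
  set r := Real.exp (-u) with hr
  have hr0 : 0 < r := Real.exp_pos _
  have hr1 : r < 1 := by
    rw [hr]; exact Real.exp_lt_one_iff.2 (by linarith)
  have hterm : ∀ i : ℕ, Real.exp (-(u*(i+1/2))) = Real.exp (-(u/2)) * r^i := by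
    intro i
    rw [hr, ← Real.exp_nat_mul, ← Real.exp_add]
    ring_nf
  have hsum : ∑ i ∈ Finset.range N, Real.exp (-(u*(i+1/2)))
      = Real.exp (-(u/2)) * ∑ i ∈ Finset.range N, r^i := by
    rw [Finset.mul_sum]; exact Finset.sum_congr rfl fun i _ => hterm i
  have hg : (∑ i ∈ Finset.range N, r^i) * (1 - r) = 1 - r^N := by
    have := geom_sum_mul r N; nlinarith [this]
  have hgle : (∑ i ∈ Finset.range N, r^i) * (1 - r) ≤ 1 := by
    rw [hg]; have : (0:ℝ) ≤ r^N := le_of_lt (pow_pos hr0 N); linarith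
  have hek := exp_key u hu
  have hp := Real.exp_pos (-(u/2))
  rw [hsum]
  -- u * (e^{-u/2} * S) ≤ 1  where S*(1-r) ≤ 1 and u*e^{-u/2} ≤ 1-r
  have hS0 : 0 ≤ ∑ i ∈ Finset.range N, r^i :=
    Finset.sum_nonneg fun i _ => le_of_lt (pow_pos hr0 i)
  nlinarith [mul_le_mul_of_nonneg_left hgle (le_of_lt hu)]

lemma key_maxent (N : ℕ) (a : ℕ → ℝ) (ha : ∀ i ∈ Finset.range N, 0 < a i)
    (hsum : ∑ i ∈ Finset.range N, a i = 1) :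
    ∑ i ∈ Finset.range N, a i * Real.log (1 / a i)
      ≤ 1 + Real.log (∑ i ∈ Finset.range N, a i * (i + 1/2)) := by
  set μ := ∑ i ∈ Finset.range N, a i * (i + 1/2) with hμdef
  have hμ : 1/2 ≤ μ := by
    have : ∑ i ∈ Finset.range N, a i * (1/2) ≤ μ := by
      apply Finset.sum_le_sum
      intro i hi
      have := ha i hi
      have hc : (0:ℝ) ≤ (i : ℝ) := Nat.cast_nonneg i
      nlinarith [ha i hi]
    rw [← Finset.sum_mul, hsum, one_mul] at this
    linarith
  have hμ0 : 0 < μ := by linarith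
  set u := 1/μ with hudef
  have hu : 0 < u := by positivity
  have huμ : u * μ = 1 := by rw [hudef]; field_simp
  have hterm : ∀ i ∈ Finset.range N,
      a i * Real.log u - a i * (u*((i:ℝ)+1/2)) + a i * Real.log (1 / a i)
        ≤ u * Real.exp (-(u*((i:ℝ)+1/2))) - a i := by
    intro i hi
    have hai := ha i hi
    have hex := Real.exp_pos (-(u*((i:ℝ)+1/2)))
    have ht : 0 < u * Real.exp (-(u*((i:ℝ)+1/2))) / a i := by positivity
    have hlog := Real.log_le_sub_one_of_pos ht
    have hexp : Real.log (u * Real.exp (-(u*((i:ℝ)+1/2))) / a i)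
        = Real.log u + (-(u*((i:ℝ)+1/2))) + Real.log (1 / a i) := by
      rw [Real.log_div (by positivity) (ne_of_gt hai), Real.log_mul (ne_of_gt hu) (ne_of_gt hex),
        Real.log_exp, Real.log_div one_ne_zero (ne_of_gt hai), Real.log_one]
      ring
    rw [hexp] at hlog
    have := mul_le_mul_of_nonneg_left hlog (le_of_lt hai)
    have hcancel : a i * (u * Real.exp (-(u*((i:ℝ)+1/2))) / a i - 1)
        = u * Real.exp (-(u*((i:ℝ)+1/2))) - a i := by
      field_simp
    nlinarith [this]
  have hsumle := Finset.sum_le_sum hterm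
  have hL : ∑ i ∈ Finset.range N,
      (a i * Real.log u - a i * (u*((i:ℝ)+1/2)) + a i * Real.log (1 / a i))
      = Real.log u - 1 + ∑ i ∈ Finset.range N, a i * Real.log (1 / a i) := by
    rw [Finset.sum_add_distrib, Finset.sum_sub_distrib, ← Finset.sum_mul, hsum]
    have : ∑ i ∈ Finset.range N, a i * (u*((i:ℝ)+1/2))
        = u * ∑ i ∈ Finset.range N, a i * ((i:ℝ)+1/2) := by
      rw [Finset.mul_sum]; exact Finset.sum_congr rfl fun i _ => by ring
    rw [this, ← hμdef, huμ]; ring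
  have hR : ∑ i ∈ Finset.range N, (u * Real.exp (-(u*((i:ℝ)+1/2))) - a i)
      ≤ 0 := by
    rw [Finset.sum_sub_distrib, hsum, ← Finset.mul_sum]
    have := geo_key N u hu
    linarith
  have hlogu : Real.log u = - Real.log μ := by
    rw [hudef, one_div, Real.log_inv]
  rw [hL] at hsumle
  have : Real.log u - 1 + ∑ i ∈ Finset.range N, a i * Real.log (1 / a i) ≤ 0 := by
    calc _ ≤ ∑ i ∈ Finset.range N, (u * Real.exp (-(u*((i:ℝ)+1/2))) - a i) := hsumle
    _ ≤ 0 := hR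
  rw [hlogu] at this
  linarith

theorem refined_rioul_one_split (n : ℕ) (hn : 1 ≤ n) (p : Fin n → ℝ)
    (hdesc : ∀ i j : Fin n, i ≤ j → p j ≤ p i)
    (hpos : ∀ i, 0 < p i)
    (hsum : ∑ i, p i = 1)
    (α : ℝ) (hα0 : 0 < α) (hα : α ≤ 1/2) :
    guessingEntropy p ≥
      (1 / Real.exp 1) *
          (2 : ℝ) ^ (shannonEntropy p + p ⟨n - 1, by omega⟩ * binaryEntropy α) -
        α * p ⟨n - 1, by omega⟩ + 1 / 2 := by
  obtain ⟨m, rfl⟩ : ∃ m, n = m + 1 := ⟨n - 1, by omega⟩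
  set pn : ℝ := p ⟨m, by omega⟩ with hpn
  have hpn0 : 0 < pn := hpos _
  have hα1 : (0:ℝ) < 1 - α := by linarith
  -- ℕ-indexed version of p
  set P : ℕ → ℝ := fun i => if h : i < m + 1 then p ⟨i, h⟩ else 0 with hP
  have hPfin : ∀ i : Fin (m+1), P (i : ℕ) = p i := by
    intro i; simp only [hP]; rw [dif_pos i.isLt]
  have hPm : P m = pn := by simp [hP, hpn]
  have hPpos : ∀ i ∈ Finset.range (m+1), 0 < P i := by
    intro i hi
    rw [Finset.mem_range] at hi
    simp only [hP, dif_pos hi]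
    exact hpos _
  -- translate hypotheses / defs to range sums
  have hsumP : ∑ i ∈ Finset.range (m+1), P i = 1 := by
    rw [← hsum, ← Fin.sum_univ_eq_sum_range]
    exact Finset.sum_congr rfl fun i _ => hPfin i
  have hG : guessingEntropy p = ∑ i ∈ Finset.range (m+1), ((i:ℝ)+1) * P i := by
    rw [guessingEntropy, ← Fin.sum_univ_eq_sum_range (fun i => ((i:ℝ)+1) * P i)]
    exact Finset.sum_congr rfl fun i _ => by rw [hPfin i]
  have hH : shannonEntropy p * Real.log 2
      = ∑ i ∈ Finset.range (m+1), P i * Real.log (1 / P i) := by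
    rw [shannonEntropy, ← Fin.sum_univ_eq_sum_range (fun i => P i * Real.log (1 / P i))]
    rw [neg_mul, Finset.sum_mul, ← Finset.sum_neg_distrib]
    apply Finset.sum_congr rfl
    intro i _
    rw [hPfin i, Real.logb, one_div, Real.log_inv]
    have h2 : Real.log 2 ≠ 0 := ne_of_gt (Real.log_pos (by norm_num))
    field_simp
  -- binary entropy in nats
  have h2 : Real.log 2 ≠ 0 := ne_of_gt (Real.log_pos (by norm_num))
  have hBE : binaryEntropy α * Real.log 2
      = -(α * Real.log α) - (1-α) * Real.log (1-α) := by
    rw [binaryEntropy, Real.logb, Real.logb]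
    field_simp
  -- the split density
  set a : ℕ → ℝ := fun i => if i < m then P i else if i = m then pn*(1-α) else pn*α with ha
  have ham : a m = pn * (1-α) := by simp [ha]
  have ham1 : a (m+1) = pn * α := by
    simp [ha]
  have haa : ∀ i ∈ Finset.range m, a i = P i := by
    intro i hi
    rw [Finset.mem_range] at hi
    simp [ha, hi]
  have hapos : ∀ i ∈ Finset.range (m+2), 0 < a i := by
    intro i hi
    rw [Finset.mem_range] at hi
    rcases lt_trichotomy i m with h | h | h
    · rw [haa i (Finset.mem_range.2 h)]
      exact hPpos i (Finset.mem_range.2 (by omega))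
    · subst h; rw [ham]; positivity
    · have : i = m + 1 := by omega
      subst this; rw [ham1]; positivity
  have hrange : ∀ f : ℕ → ℝ, ∑ i ∈ Finset.range (m+2), f i
      = (∑ i ∈ Finset.range m, f i) + f m + f (m+1) := by
    intro f
    rw [Finset.sum_range_succ, Finset.sum_range_succ]
  have hrangeP : ∀ f : ℕ → ℝ, ∑ i ∈ Finset.range (m+1), f i
      = (∑ i ∈ Finset.range m, f i) + f m := by
    intro f
    rw [Finset.sum_range_succ]
  -- S1 : total mass
  have hsa : ∑ i ∈ Finset.range (m+2), a i = 1 := by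
    rw [hrange]
    have e1 : ∑ i ∈ Finset.range m, a i = ∑ i ∈ Finset.range m, P i :=
      Finset.sum_congr rfl haa
    have e2 := hrangeP P
    rw [e2, hPm] at hsumP
    rw [e1, ham, ham1]
    linarith
  -- S2 : entropy
  have hent : ∑ i ∈ Finset.range (m+2), a i * Real.log (1 / a i)
      = shannonEntropy p * Real.log 2 + pn * (binaryEntropy α * Real.log 2) := by
    rw [hrange]
    have e1 : ∑ i ∈ Finset.range m, a i * Real.log (1 / a i)
        = ∑ i ∈ Finset.range m, P i * Real.log (1 / P i) := by
      apply Finset.sum_congr rfl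
      intro i hi
      rw [haa i hi]
    have e2 := hrangeP (fun i => P i * Real.log (1 / P i))
    rw [hH, e2, hPm]
    have l1 : Real.log (1 / (pn * (1-α))) = -(Real.log pn + Real.log (1-α)) := by
      rw [one_div, Real.log_inv, Real.log_mul (ne_of_gt hpn0) (ne_of_gt hα1)]
    have l2 : Real.log (1 / (pn * α)) = -(Real.log pn + Real.log α) := by
      rw [one_div, Real.log_inv, Real.log_mul (ne_of_gt hpn0) (ne_of_gt hα0)]
    have l3 : Real.log (1 / pn) = -Real.log pn := by
      rw [one_div, Real.log_inv]
    rw [e1, ham, ham1, l1, l2, l3, hBE]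
    ring
  -- S3 : mean
  have hmean : ∑ i ∈ Finset.range (m+2), a i * ((i:ℝ) + 1/2)
      = guessingEntropy p - 1/2 + α * pn := by
    rw [hrange]
    have e1 : ∑ i ∈ Finset.range m, a i * ((i:ℝ) + 1/2)
        = ∑ i ∈ Finset.range m, P i * ((i:ℝ) + 1/2) := by
      apply Finset.sum_congr rfl
      intro i hi
      rw [haa i hi]
    have e3 : ∑ i ∈ Finset.range (m+1), P i * ((i:ℝ) + 1/2)
        = guessingEntropy p - 1/2 := by
      have : ∀ i ∈ Finset.range (m+1), P i * ((i:ℝ) + 1/2)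
          = ((i:ℝ)+1) * P i - P i * (1/2) := by
        intro i _; ring
      rw [Finset.sum_congr rfl this, Finset.sum_sub_distrib, ← hG, ← Finset.sum_mul, hsumP]
      ring
    have e2 := hrangeP (fun i => P i * ((i:ℝ) + 1/2))
    rw [e2, hPm] at e3
    rw [e1, ham, ham1]
    push_cast
    linarith [e3]
  -- apply the max-entropy lemma
  have hkey := key_maxent (m+2) a hapos hsa
  rw [hent, hmean] at hkey
  -- positivity of the mean
  have hG1 : 1 ≤ guessingEntropy p := by
    rw [← hsum, guessingEntropy]
    apply Finset.sum_le_sum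
    intro i _
    have h1 : (0:ℝ) ≤ (i:ℕ) := Nat.cast_nonneg _
    nlinarith [hpos i]
  have hμ0 : 0 < guessingEntropy p - 1/2 + α * pn := by nlinarith
  -- exponentiate
  set E : ℝ := shannonEntropy p + pn * binaryEntropy α with hE
  have hexp : (2:ℝ) ^ E = Real.exp (E * Real.log 2) := by
    rw [Real.rpow_def_of_pos (by norm_num : (0:ℝ) < 2)]
    ring_nf
  have hkey2 : E * Real.log 2 ≤ 1 + Real.log (guessingEntropy p - 1/2 + α * pn) := by
    rw [hE]; ring_nf; ring_nf at hkey; linarith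
  have hfin : (2:ℝ) ^ E ≤ Real.exp 1 * (guessingEntropy p - 1/2 + α * pn) := by
    rw [hexp]
    calc Real.exp (E * Real.log 2) ≤ Real.exp (1 + Real.log (guessingEntropy p - 1/2 + α * pn)) :=
          Real.exp_le_exp.2 hkey2
      _ = Real.exp 1 * (guessingEntropy p - 1/2 + α * pn) := by
          rw [Real.exp_add, Real.exp_log hμ0]
  have he1 : (0:ℝ) < Real.exp 1 := Real.exp_pos 1
  show guessingEntropy p ≥ 1 / Real.exp 1 * (2:ℝ) ^ E - α * pn + 1/2
  rw [ge_iff_le, div_mul_eq_mul_div, one_mul]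
  have hd : (2:ℝ)^E / Real.exp 1 ≤ guessingEntropy p - 1/2 + α * pn := by
    rw [div_le_iff₀ he1, mul_comm]
    exact hfin
  linarith
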